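/- Let K be a nonempty convex compact subset of a Hausdorff locally convex topological vector space and f : K → K a continuous affine map. Then f has a fixed point in K, and moreover any weak cluster-style point p with p ∈ ⋂ₙ Aₙ(K), where Aₙ = (1/n)(I + f + … + f^{n−1}), is a fixed point of f. -/

import Mathlib

def AffOn {X : Type*} [AddCommGroup X] [Module ℝ X] (K : Set X) (f : K → K) : Prop :=
  ∀ (x y : K) (t : ℝ), 0 ≤ t → t ≤ 1 →
    ∀ h : t • (x : X) + (1 - t) • (y : X) ∈ K,
      (f ⟨_, h⟩ : X) = t • (f x : X) + (1 - t) • (f y : X)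

section Aux

variable {X : Type*} [AddCommGroup X] [Module ℝ X] {K : Set X}

open Finset

/-- An `AffOn` map preserves finite convex combinations. -/
theorem affOn_sum (hconv : Convex ℝ K) {f : K → K} (haff : AffOn K f)
    {ι : Type*} (s : Finset ι) :
    ∀ (w : ι → ℝ) (g : ι → K), (∀ i ∈ s, 0 ≤ w i) → (∑ i ∈ s, w i) = 1 →
      ∀ h : (∑ i ∈ s, w i • (g i : X)) ∈ K,
        (f ⟨_, h⟩ : X) = ∑ i ∈ s, w i • (f (g i) : X) := by
  classical
  induction s using Finset.induction_on with
  | empty => intro w g hw hsum h; simp at hsum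
  | insert i s hi ih =>
    intro w g hw hsum h
    have hw0 : 0 ≤ w i := hw i (mem_insert_self _ _)
    have hws : ∀ j ∈ s, 0 ≤ w j := fun j hj => hw j (mem_insert_of_mem hj)
    rw [Finset.sum_insert hi] at hsum
    by_cases hW : (∑ j ∈ s, w j) = 0
    · -- all other weights vanish
      have hz : ∀ j ∈ s, w j = 0 := by
        intro j hj
        exact (Finset.sum_eq_zero_iff_of_nonneg hws).1 hW j hj
      have hwi : w i = 1 := by rw [hW] at hsum; linarith
      have hval : (∑ j ∈ insert i s, w j • (g j : X)) = (g i : X) := by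
        rw [Finset.sum_insert hi, hwi, one_smul, Finset.sum_eq_zero, add_zero]
        intro j hj; rw [hz j hj, zero_smul]
      have hpe : (⟨_, h⟩ : K) = g i := Subtype.ext hval
      rw [hpe, Finset.sum_insert hi, hwi, one_smul, Finset.sum_eq_zero, add_zero]
      intro j hj; rw [hz j hj, zero_smul]
    · set W : ℝ := ∑ j ∈ s, w j with hWdef
      have hWpos : 0 < W := lt_of_le_of_ne (Finset.sum_nonneg hws) (Ne.symm hW)
      have htW : w i = 1 - W := by linarith
      have ht1 : w i ≤ 1 := by linarith
      have hWne : W ≠ 0 := ne_of_gt hWpos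
      have h1t : 1 - w i = W := by linarith
      set y : X := ∑ j ∈ s, (w j / W) • (g j : X) with hydef
      have hy : y ∈ K := by
        refine hconv.sum_mem (fun j hj => div_nonneg (hws j hj) hWpos.le) ?_
          (fun j hj => (g j).2)
        rw [← Finset.sum_div, ← hWdef, div_self hWne]
      have hval : (∑ j ∈ insert i s, w j • (g j : X))
          = w i • (g i : X) + (1 - w i) • ((⟨y, hy⟩ : K) : X) := by
        rw [Finset.sum_insert hi]
        congr 1
        show (∑ j ∈ s, w j • (g j : X)) = (1 - w i) • y
        rw [hydef, Finset.smul_sum]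
        refine Finset.sum_congr rfl fun j hj => ?_
        rw [smul_smul, h1t, mul_div_cancel₀ _ hWne]
      have h' : w i • (g i : X) + (1 - w i) • ((⟨y, hy⟩ : K) : X) ∈ K := hval ▸ h
      have hpe : (⟨_, h⟩ : K) = ⟨_, h'⟩ := Subtype.ext hval
      rw [hpe, haff (g i) ⟨y, hy⟩ (w i) hw0 ht1 h']
      have hIH := ih (fun j => w j / W) g (fun j hj => div_nonneg (hws j hj) hWpos.le)
        (by rw [← Finset.sum_div, ← hWdef, div_self hWne]) hy
      rw [Finset.sum_insert hi]
      congr 1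
      rw [hIH, Finset.smul_sum]
      refine Finset.sum_congr rfl fun j hj => ?_
      rw [smul_smul, h1t, mul_div_cancel₀ _ hWne]

/-- Iterates of an `AffOn` map preserve finite convex combinations. -/
theorem affOn_sum_iter (hconv : Convex ℝ K) {f : K → K} (haff : AffOn K f)
    (m : ℕ) {ι : Type*} (s : Finset ι) (w : ι → ℝ) (g : ι → K)
    (hw : ∀ i ∈ s, 0 ≤ w i) (hsum : (∑ i ∈ s, w i) = 1) :
    ∀ h : (∑ i ∈ s, w i • (g i : X)) ∈ K,
      (f^[m] ⟨_, h⟩ : X) = ∑ i ∈ s, w i • ((f^[m] (g i) : K) : X) := by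
  induction m with
  | zero => intro h; simp
  | succ m ihm =>
    intro h
    have hz : (∑ i ∈ s, w i • ((f^[m] (g i) : K) : X)) ∈ K :=
      hconv.sum_mem hw hsum (fun i hi => (f^[m] (g i)).2)
    have he : f^[m] (⟨_, h⟩ : K) = ⟨_, hz⟩ := Subtype.ext (ihm h)
    rw [Function.iterate_succ_apply', he,
      affOn_sum hconv haff s w (fun i => f^[m] (g i)) hw hsum hz]
    refine Finset.sum_congr rfl fun i hi => ?_
    rw [Function.iterate_succ_apply']

theorem avg_mem (hconv : Convex ℝ K) (x : ℕ → K) (n : ℕ) :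
    (1 / ((n : ℝ) + 1)) • ∑ k ∈ Finset.range (n + 1), (x k : X) ∈ K := by
  rw [Finset.smul_sum]
  refine hconv.sum_mem (fun i _ => by positivity) ?_ (fun i _ => (x i).2)
  rw [Finset.sum_const, Finset.card_range, nsmul_eq_mul]
  push_cast
  field_simp

/-- The ergodic average with `n+1` terms, as a self-map of `K`. -/
noncomputable def Am (hconv : Convex ℝ K) (f : K → K) (n : ℕ) (x : K) : K :=
  ⟨(1 / ((n : ℝ) + 1)) • ∑ k ∈ Finset.range (n + 1), (f^[k] x : X),
    avg_mem hconv (fun k => f^[k] x) n⟩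

theorem sum_range_mul' {M : Type*} [AddCommMonoid M] (g : ℕ → M) (a : ℕ) :
    ∀ b : ℕ, ∑ k ∈ Finset.range (b * a), g k
      = ∑ j ∈ Finset.range b, ∑ i ∈ Finset.range a, g (j * a + i) := by
  intro b
  induction b with
  | zero => simp
  | succ b ihb =>
    have : (b + 1) * a = b * a + a := by ring
    rw [this, Finset.sum_range_add, ihb, Finset.sum_range_succ]

theorem am_decomp (hconv : Convex ℝ K) {f : K → K} (haff : AffOn K f)
    (a b : ℕ) (x : K) :
    ∃ y : K, Am hconv f (a * b + a + b) x = Am hconv f a y := by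
  classical
  set w : ℕ → ℝ := fun _ => 1 / ((b : ℝ) + 1) with hwdef
  have hw : ∀ j ∈ Finset.range (b + 1), 0 ≤ w j := fun j _ => by positivity
  have hsumw : (∑ j ∈ Finset.range (b + 1), w j) = 1 := by
    rw [Finset.sum_const, Finset.card_range, nsmul_eq_mul]
    push_cast; field_simp
  have hyK : (∑ j ∈ Finset.range (b + 1), w j • ((f^[j * (a + 1)] x : K) : X)) ∈ K :=
    hconv.sum_mem hw hsumw (fun j _ => (f^[j * (a + 1)] x).2)
  refine ⟨⟨_, hyK⟩, ?_⟩
  apply Subtype.ext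
  show (1 / (((a * b + a + b : ℕ) : ℝ) + 1)) • ∑ k ∈ Finset.range (a * b + a + b + 1), (f^[k] x : X)
    = (1 / ((a : ℝ) + 1)) • ∑ i ∈ Finset.range (a + 1), (f^[i] (⟨_, hyK⟩ : K) : X)
  have hiter : ∀ i, (f^[i] (⟨_, hyK⟩ : K) : X)
      = ∑ j ∈ Finset.range (b + 1), w j • ((f^[j * (a + 1) + i] x : K) : X) := by
    intro i
    rw [affOn_sum_iter hconv haff i _ w (fun j => f^[j * (a + 1)] x) hw hsumw hyK]
    refine Finset.sum_congr rfl fun j _ => ?_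
    rw [← Function.iterate_add_apply, Nat.add_comm i (j * (a + 1))]
  have hidx : a * b + a + b + 1 = (b + 1) * (a + 1) := by ring
  rw [hidx, sum_range_mul' (fun k => ((f^[k] x : K) : X)) (a + 1) (b + 1)]
  simp only [hiter]
  rw [Finset.sum_comm (s := Finset.range (a + 1)) (t := Finset.range (b + 1))]
  rw [Finset.smul_sum, Finset.smul_sum]
  refine Finset.sum_congr rfl fun j _ => ?_
  rw [Finset.smul_sum, Finset.smul_sum]
  refine Finset.sum_congr rfl fun i _ => ?_
  rw [smul_smul, hwdef]
  congr 1
  push_cast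
  rw [div_mul_div_comm, one_mul, div_eq_div_iff (by positivity) (by positivity)]
  ring

end Aux

section Top

variable {X : Type*} [AddCommGroup X] [Module ℝ X] [TopologicalSpace X]
  [IsTopologicalAddGroup X] [ContinuousSMul ℝ X] [T2Space X] {K : Set X}

omit [T2Space X] in
theorem am_continuous (hconv : Convex ℝ K) {f : K → K} (hf : Continuous f) (n : ℕ) :
    Continuous (Am hconv f n) := by
  apply Continuous.subtype_mk
  exact continuous_const.smul (continuous_finset_sum _ fun k _ =>
    continuous_subtype_val.comp (hf.iterate k))

theorem exists_iInter_point (hne : K.Nonempty) (hconv : Convex ℝ K)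
    (hcomp : IsCompact K) {f : K → K} (hf : Continuous f) (haff : AffOn K f) :
    ∃ p : K, ∀ n : ℕ, ∃ q : K, p = Am hconv f n q := by
  haveI : CompactSpace K := isCompact_iff_compactSpace.mp hcomp
  haveI : Nonempty K := hne.to_subtype
  set S : ℕ → Set X := fun n => Set.range (fun x : K => ((Am hconv f n x : K) : X)) with hSdef
  have hd : Directed (· ⊇ ·) S := by
    intro m n
    refine ⟨m * n + m + n, ?_, ?_⟩
    · rintro _ ⟨x, rfl⟩
      obtain ⟨y, hy⟩ := am_decomp hconv haff m n x
      exact ⟨y, congrArg Subtype.val hy.symm⟩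
    · rintro _ ⟨x, rfl⟩
      obtain ⟨y, hy⟩ := am_decomp hconv haff n m x
      have : n * m + n + m = m * n + m + n := by ring
      rw [this] at hy
      exact ⟨y, congrArg Subtype.val hy.symm⟩
  have hScomp : ∀ n, IsCompact (S n) := fun n =>
    isCompact_range (continuous_subtype_val.comp (am_continuous hconv hf n))
  obtain ⟨x, hx⟩ := IsCompact.nonempty_iInter_of_directed_nonempty_isCompact_isClosed
    S hd (fun n => Set.range_nonempty _) hScomp (fun n => (hScomp n).isClosed)
  rw [Set.mem_iInter] at hx
  obtain ⟨q0, hq0⟩ := hx 0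
  refine ⟨Am hconv f 0 q0, fun n => ?_⟩
  obtain ⟨q, hq⟩ := hx n
  exact ⟨q, Subtype.ext (hq0.trans hq.symm)⟩

end Top

theorem stmt16 {X : Type*} [AddCommGroup X] [Module ℝ X] [TopologicalSpace X]
    [IsTopologicalAddGroup X] [ContinuousSMul ℝ X] [T2Space X] [LocallyConvexSpace ℝ X]
    (K : Set X) (hne : K.Nonempty) (hconv : Convex ℝ K) (hcomp : IsCompact K)
    (f : K → K) (hf : Continuous f) (haff : AffOn K f) :
    (∃ p : K, f p = p) ∧
    (∀ p : K, (∀ n : ℕ, 1 ≤ n → ∃ q : K,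
        (p : X) = (1 / (n : ℝ)) • ∑ k ∈ Finset.range n, (f^[k] q : X)) →
      f p = p) := by
  -- boundedness of K - K
  have hCcomp : IsCompact ((fun z : X × X => z.1 - z.2) '' (K ×ˢ K)) :=
    (hcomp.prod hcomp).image (continuous_fst.sub continuous_snd)
  have hCbdd : Bornology.IsVonNBounded ℝ ((fun z : X × X => z.1 - z.2) '' (K ×ˢ K)) := by
    letI U : UniformSpace X := IsTopologicalAddGroup.rightUniformSpace X
    haveI : IsUniformAddGroup X := isUniformAddGroup_of_addCommGroup
    exact hCcomp.totallyBounded.isVonNBounded ℝ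
  have part2 : ∀ p : K, (∀ n : ℕ, 1 ≤ n → ∃ q : K,
      (p : X) = (1 / (n : ℝ)) • ∑ k ∈ Finset.range n, (f^[k] q : X)) → f p = p := by
    intro p hp
    have key : ∀ n : ℕ, ∃ c ∈ (fun z : X × X => z.1 - z.2) '' (K ×ˢ K),
        (f p : X) - (p : X) = (1 / ((n : ℝ) + 1)) • c := by
      intro n
      obtain ⟨q, hq⟩ := hp (n + 1) (by omega)
      refine ⟨(f^[n + 1] q : X) - (q : X), ⟨(f^[n+1] q, q), ⟨(f^[n+1] q).2, q.2⟩, rfl⟩, ?_⟩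
      set w : ℕ → ℝ := fun _ => 1 / ((n : ℝ) + 1) with hwdef
      have hw : ∀ k ∈ Finset.range (n + 1), 0 ≤ w k := fun k _ => by positivity
      have hsumw : (∑ k ∈ Finset.range (n + 1), w k) = 1 := by
        rw [Finset.sum_const, Finset.card_range, nsmul_eq_mul]
        push_cast; field_simp
      have hpval : (p : X) = ∑ k ∈ Finset.range (n + 1), w k • ((f^[k] q : K) : X) := by
        rw [hq, Finset.smul_sum]
        push_cast
        rfl
      have hmem : (∑ k ∈ Finset.range (n + 1), w k • ((f^[k] q : K) : X)) ∈ K :=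
        hpval ▸ p.2
      have hpe : p = ⟨_, hmem⟩ := Subtype.ext hpval
      have hfp : (f p : X) = ∑ k ∈ Finset.range (n + 1), w k • ((f^[k + 1] q : K) : X) := by
        rw [hpe, affOn_sum hconv haff _ w (fun k => f^[k] q) hw hsumw hmem]
        exact Finset.sum_congr rfl fun k _ => by rw [Function.iterate_succ_apply']
      rw [hfp, hpval, ← Finset.sum_sub_distrib]
      have : ∀ k ∈ Finset.range (n + 1),
          w k • ((f^[k + 1] q : K) : X) - w k • ((f^[k] q : K) : X)
          = w k • (((f^[k + 1] q : K) : X) - ((f^[k] q : K) : X)) := fun k _ => by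
        rw [smul_sub]
      rw [Finset.sum_congr rfl this, ← Finset.smul_sum,
        Finset.sum_range_sub (fun k => ((f^[k] q : K) : X))]
      simp
    choose c hcmem hceq using key
    have h1 : Filter.Tendsto (fun n : ℕ => (1 / ((n : ℝ) + 1)) • c n) Filter.atTop (nhds 0) :=
      hCbdd.smul_tendsto_zero (Filter.Eventually.of_forall hcmem)
        tendsto_one_div_add_atTop_nhds_zero_nat
    have h2 : Filter.Tendsto (fun n : ℕ => (1 / ((n : ℝ) + 1)) • c n) Filter.atTop
        (nhds ((f p : X) - (p : X))) := by
      have : (fun n : ℕ => (1 / ((n : ℝ) + 1)) • c n)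
          = fun _ : ℕ => (f p : X) - (p : X) := by
        funext n; rw [← hceq n]
      rw [this]
      exact tendsto_const_nhds
    have hd0 : (f p : X) - (p : X) = 0 := tendsto_nhds_unique h2 h1
    exact Subtype.ext (sub_eq_zero.mp hd0)
  refine ⟨?_, part2⟩
  obtain ⟨p, hp⟩ := exists_iInter_point hne hconv hcomp hf haff
  refine ⟨p, part2 p fun n hn => ?_⟩
  obtain ⟨m, rfl⟩ : ∃ m, n = m + 1 := ⟨n - 1, by omega⟩
  obtain ⟨q, hq⟩ := hp m
  refine ⟨q, ?_⟩
  rw [hq]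
  show (1 / ((m : ℝ) + 1)) • _ = _
  push_cast
  rfl
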